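/- Consider ℤ × ℤ with operations (y,k) + (y',k') = (y + y', (-1)^{y'} k + (-1)^y k') and (y,k) ∘ (y',k') = (y + y', k + k'). Then (ℤ × ℤ, +, ∘) is a digroup but NOT a left skew brace: there exist a, b, c with a ∘ (b + c) ≠ (a ∘ b) + (-(a)) + (a ∘ c) (inverse taken with respect to +). -/
import Mathlib


/-- (-1)^y for y : ℤ. -/
def msign (y : ℤ) : ℤ := (((-1 : ℤˣ) ^ y : ℤˣ) : ℤ)


lemma msign_add (a b : ℤ) : msign (a+b) = msign a * msign b := by
  simp [msign, zpow_add]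
lemma msign_neg (a : ℤ) : msign (-a) = msign a := by
  simp [msign, zpow_neg]
lemma msign_zero : msign 0 = 1 := by simp [msign]
lemma msign_one : msign 1 = -1 := by simp [msign]
lemma msign_sq (a : ℤ) : msign a * msign a = 1 := by
  rw [msign, ← Units.val_mul, ← zpow_add]
  rw [← two_mul, zpow_mul]; have h : ((-1:ℤˣ)^(2:ℤ)) = 1 := by decide
  rw [h, one_zpow, Units.val_one]

/-- (y,k) + (y',k') = (y + y', (-1)^{y'} k + (-1)^y k') -/
def add15 (p q : ℤ × ℤ) : ℤ × ℤ := (p.1 + q.1, msign q.1 * p.2 + msign p.1 * q.2)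

/-- (y,k) ∘ (y',k') = (y + y', k + k') -/
def cmul15 (p q : ℤ × ℤ) : ℤ × ℤ := (p.1 + q.1, p.2 + q.2)

/-- The inverse of (y,k) with respect to +. -/
def neg15 (p : ℤ × ℤ) : ℤ × ℤ := (-p.1, -p.2)

/-- (ℤ × ℤ, +, ∘) with these operations is a digroup but not a left skew brace. -/
theorem zxz_digroup_not_skew_brace :
    (∀ p q r, add15 (add15 p q) r = add15 p (add15 q r)) ∧
    (∀ p, add15 (0, 0) p = p) ∧ (∀ p, add15 p (0, 0) = p) ∧
    (∀ p, add15 (neg15 p) p = (0, 0) ∧ add15 p (neg15 p) = (0, 0)) ∧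
    (∀ p q r, cmul15 (cmul15 p q) r = cmul15 p (cmul15 q r)) ∧
    (∀ p, cmul15 (0, 0) p = p) ∧ (∀ p, cmul15 p (0, 0) = p) ∧
    (∀ p, ∃ q, cmul15 q p = (0, 0) ∧ cmul15 p q = (0, 0)) ∧
    (∃ a b c, cmul15 a (add15 b c) ≠
      add15 (add15 (cmul15 a b) (neg15 a)) (cmul15 a c)) := by
  refine ⟨fun p q r => ?_, fun p => ?_, fun p => ?_, fun p => ⟨?_, ?_⟩,
    fun p q r => ?_, fun p => ?_, fun p => ?_, fun p => ⟨neg15 p, ?_, ?_⟩,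
    ⟨(0,1), (1,0), (1,0), ?_⟩⟩ <;>
    simp [add15, cmul15, neg15, msign_add, msign_neg, msign_zero, msign_one, Prod.ext_iff] <;>
    ring_nf <;> simp [msign_sq, mul_comm, mul_assoc]
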